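/- arXiv:1708.07681 — 7 statements merged into one kernel-verified Lean document; each statement's English description precedes it below -/
import Mathlib

section
/- Let (λ_z)_{z∈ℤ} be a square-summable real sequence with Σ_z λ_z² = 1, and define κ_r = 2^{r/2−1}(r−1)! Σ_z λ_z^r for r ≥ 2. Then for every r ≥ 2, κ_{2r}/((2r−1)!) − 1 ≥ (r−1)(κ_4/3! − 1). -/
lemma convex_lb (b : ℕ → ℝ) (hconv : ∀ j, b (j+2) - 2*b (j+1) + b j ≥ 0) (m : ℕ) :
    b m - b 0 ≥ (m:ℝ) * (b 1 - b 0) := by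
  have hstep : ∀ j, b (j+1) - b j ≥ b 1 - b 0 := by
    intro j
    induction j with
    | zero => exact le_refl _
    | succ n ih => have := hconv n; linarith
  induction m with
  | zero => simp
  | succ n ih => have := hstep n; push_cast; linarith

/-- For a normalized spectral sequence of the second Wiener chaos, the cumulants
κ_r = 2^{r/2−1}(r−1)! Σ λ_z^r satisfy
κ_{2r}/(2r−1)! − 1 ≥ (r−1)(κ_4/3! − 1) for every r ≥ 2. -/
theorem stmt_1 (l : ℤ → ℝ) (hsum : Summable fun z => (l z)^2)
    (h1 : ∑' z, (l z)^2 = 1)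
    (κ : ℕ → ℝ)
    (hκ : ∀ r, 2 ≤ r →
      κ r = (2:ℝ)^((r:ℝ)/2 - 1) * ((r-1).factorial : ℝ) * ∑' z, (l z)^r) :
    ∀ r : ℕ, 2 ≤ r →
      κ (2*r) / ((2*r-1).factorial : ℝ) - 1 ≥
        ((r:ℝ) - 1) * (κ 4 / ((Nat.factorial 3 : ℕ) : ℝ) - 1) := by
  have hsummable : ∀ j : ℕ, Summable fun z => (l z)^(2*j+2) := by
    intro j
    have h1' : ∀ᶠ z in Filter.cofinite, (l z)^2 ≤ 1 :=
      hsum.tendsto_cofinite_zero.eventually (eventually_le_nhds (by norm_num))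
    apply Summable.of_norm_bounded_eventually hsum
    filter_upwards [h1'] with z hz
    have h0 : (0:ℝ) ≤ (l z)^2 := sq_nonneg _
    rw [Real.norm_eq_abs, abs_of_nonneg (by rw [show 2*j+2 = (j+1)*2 by ring, pow_mul]; positivity)]
    calc (l z)^(2*j+2) = ((l z)^2)^(j+1) := by ring
      _ ≤ ((l z)^2)^1 := pow_le_pow_of_le_one h0 hz (by omega)
      _ = (l z)^2 := pow_one _
  set T : ℕ → ℝ := fun j => ∑' z, (l z)^(2*j+2) with hT
  have key : ∀ j, 4 * T (j+2) - 4 * T (j+1) + T j ≥ 0 := by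
    intro j
    have e : 4 * T (j+2) - 4 * T (j+1) + T j
        = ∑' z, (4*(l z)^(2*(j+2)+2) - 4*(l z)^(2*(j+1)+2) + (l z)^(2*j+2)) := by
      rw [hT]
      rw [Summable.tsum_add (((hsummable (j+2)).mul_left 4).sub ((hsummable (j+1)).mul_left 4))
          (hsummable j),
        Summable.tsum_sub ((hsummable (j+2)).mul_left 4) ((hsummable (j+1)).mul_left 4),
        tsum_mul_left, tsum_mul_left]
    rw [e]
    apply tsum_nonneg
    intro z
    have e2 : 4*(l z)^(2*(j+2)+2) - 4*(l z)^(2*(j+1)+2) + (l z)^(2*j+2)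
        = ((l z)^2)^(j+1) * (2*(l z)^2 - 1)^2 := by ring
    rw [e2]; positivity
  set b : ℕ → ℝ := fun j => 2^j * T j with hbdef
  have hconv : ∀ j, b (j+2) - 2*b (j+1) + b j ≥ 0 := by
    intro j
    have e : b (j+2) - 2*b (j+1) + b j = 2^j * (4 * T (j+2) - 4 * T (j+1) + T j) := by
      rw [hbdef]; ring
    rw [e]
    exact mul_nonneg (by positivity) (key j)
  have hb0 : b 0 = 1 := by
    rw [hbdef, hT]; simpa using h1
  intro r hr
  have hκ2r := hκ (2*r) (by omega)
  have hκ4 := hκ 4 (by omega)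
  have hfac : ((2*r-1).factorial : ℝ) ≠ 0 := by positivity
  have hexp : (2:ℝ)^(((2*r : ℕ):ℝ)/2 - 1) = (2:ℝ)^(r-1 : ℕ) := by
    rw [show (((2*r : ℕ):ℝ)/2 - 1) = ((r-1 : ℕ):ℝ) by
      push_cast [Nat.cast_sub (by omega : 1 ≤ r)]; ring]
    exact Real.rpow_natCast 2 (r-1)
  have hκ2r' : κ (2*r) / ((2*r-1).factorial : ℝ) = b (r-1) := by
    rw [hκ2r, hexp, hbdef, hT]
    field_simp
    rw [show 2*(r-1)+2 = 2*r by omega]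
  have hκ4' : κ 4 / ((Nat.factorial 3 : ℕ) : ℝ) = b 1 := by
    rw [hκ4, hbdef, hT]
    norm_num [Nat.factorial]
    ring
  rw [hκ2r', hκ4']
  have := convex_lb b hconv (r-1)
  rw [hb0] at this
  have hc : ((r-1 : ℕ):ℝ) = (r:ℝ) - 1 := by
    push_cast [Nat.cast_sub (by omega : 1 ≤ r)]; ring
  rw [hc] at this
  linarith
end

section
/- Let (λ_z)_{z∈ℤ} be a square-summable real sequence with Σ_z λ_z² = 1, and define Δ_{n,m} = (1/2) Σ_z (2^{n/2} λ_z^n − 2^{m/2} λ_z^m)² for positive integers n, m. If Δ_{n,m} = 0 for some n ≠ m with n + m even, then exactly two coefficients are nonzero and each satisfies λ_z² = 1/2, and Δ_{n',m'} = 0 for all n' ≠ m' with n' + m' even. -/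
open Filter Real

private lemma rpow_half_sq (n : ℕ) : ((2:ℝ)^((n:ℝ)/2))^2 = 2^n := by
  rw [sq, ← Real.rpow_add (by norm_num)]
  rw [show (n:ℝ)/2 + (n:ℝ)/2 = (n:ℝ) by ring, Real.rpow_natCast]

private lemma helper_le (x : ℝ) (hx : x^2 = 1/2) {a b : ℕ} (hba : b ≤ a) (hpar : a % 2 = b % 2) :
    (2:ℝ)^((a:ℝ)/2) * x^a = (2:ℝ)^((b:ℝ)/2) * x^b := by
  obtain ⟨k, hk⟩ : ∃ k, a = b + 2*k := ⟨(a-b)/2, by omega⟩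
  subst hk
  have h2 : (2:ℝ)^(((b+2*k:ℕ):ℝ)/2) = (2:ℝ)^((b:ℝ)/2) * 2^k := by
    push_cast
    rw [show ((b:ℝ)+2*k)/2 = (b:ℝ)/2 + k by ring, Real.rpow_add (by norm_num),
      Real.rpow_natCast]
  have hk1 : ((1:ℝ)/2)^k * 2^k = 1 := by rw [← mul_pow]; norm_num
  rw [h2, pow_add, pow_mul, hx]
  linear_combination (2:ℝ)^((b:ℝ)/2) * x^b * hk1

private lemma helper (x : ℝ) (hx : x^2 = 1/2) {a b : ℕ} (hpar : a % 2 = b % 2) :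
    (2:ℝ)^((a:ℝ)/2) * x^a = (2:ℝ)^((b:ℝ)/2) * x^b := by
  rcases le_total b a with h | h
  · exact helper_le x hx h hpar
  · exact (helper_le x hx h hpar.symm).symm

private lemma dichotomy (x : ℝ) {n m : ℕ} (hnm : n ≠ m)
    (h : (2:ℝ)^((n:ℝ)/2) * x^n = (2:ℝ)^((m:ℝ)/2) * x^m) : x = 0 ∨ x^2 = 1/2 := by
  have hsq : (2*x^2)^n = (2*x^2)^m := by
    have h2 := congrArg (fun y => y^2) h
    simp only [mul_pow, rpow_half_sq] at h2
    calc (2*x^2)^n = 2^n * (x^n)^2 := by rw [mul_pow, ← pow_mul, ← pow_mul]; ring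
    _ = 2^m * (x^m)^2 := h2
    _ = (2*x^2)^m := by rw [mul_pow, ← pow_mul, ← pow_mul]; ring
  by_cases hx0 : x = 0
  · exact Or.inl hx0
  right
  have ht0 : 0 < 2*x^2 := by positivity
  have hlog := congrArg Real.log hsq
  rw [Real.log_pow, Real.log_pow] at hlog
  have hl0 : Real.log (2*x^2) = 0 := by
    by_contra hne
    exact hnm (Nat.cast_injective (mul_right_cancel₀ hne hlog))
  rcases Real.log_eq_zero.mp hl0 with h' | h' | h' <;> [linarith; linarith; linarith]

private lemma parity_of_even {a b : ℕ} (h : Even (a + b)) : a % 2 = b % 2 := by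
  rcases Nat.even_or_odd a with ha | ha <;> rcases Nat.even_or_odd b with hb | hb <;>
    simp [Nat.even_iff, Nat.odd_iff] at * <;> omega

/-- If Δ_{n,m} = (1/2) Σ_z (2^{n/2} λ_z^n − 2^{m/2} λ_z^m)² vanishes for some
n ≠ m with n + m even, then exactly two coefficients are nonzero, each with
square 1/2, and all such Δ_{n',m'} vanish. -/
theorem stmt_2 (l : ℤ → ℝ) (hsum : Summable fun z => (l z)^2)
    (h1 : ∑' z, (l z)^2 = 1)
    (Δ : ℕ → ℕ → ℝ)
    (hΔ : ∀ n m : ℕ, Δ n m =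
      (1/2) * ∑' z, ((2:ℝ)^((n:ℝ)/2) * (l z)^n - (2:ℝ)^((m:ℝ)/2) * (l z)^m)^2)
    (n m : ℕ) (hn : 1 ≤ n) (hm : 1 ≤ m) (hnm : n ≠ m) (heven : Even (n + m))
    (h0 : Δ n m = 0) :
    (∃ k j : ℤ, k ≠ j ∧ (l k)^2 = 1/2 ∧ (l j)^2 = 1/2 ∧
      ∀ z, z ≠ k → z ≠ j → l z = 0) ∧
    ∀ n' m' : ℕ, 1 ≤ n' → 1 ≤ m' → n' ≠ m' → Even (n' + m') → Δ n' m' = 0 := by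
  -- the terms tend to zero
  have hsmall : ∀ᶠ z in cofinite, (l z)^2 ≤ 1 := by
    filter_upwards [hsum.tendsto_cofinite_zero.eventually_lt_const (show (0:ℝ) < 1 by norm_num)]
      with z hz using hz.le
  -- summability of the defining series
  have hsummable : ∀ (a b : ℕ), 1 ≤ a → 1 ≤ b →
      Summable (fun z => ((2:ℝ)^((a:ℝ)/2) * (l z)^a - (2:ℝ)^((b:ℝ)/2) * (l z)^b)^2) := by
    intro a b ha hb
    apply Summable.of_norm_bounded_eventually (g := fun z => (2*2^a + 2*2^b) * (l z)^2)
      (hsum.mul_left _)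
    filter_upwards [hsmall] with z hz
    have hbound : ∀ c : ℕ, 1 ≤ c → ((2:ℝ)^((c:ℝ)/2) * (l z)^c)^2 ≤ 2^c * (l z)^2 := by
      intro c hc
      rw [mul_pow, rpow_half_sq, ← pow_mul, mul_comm c 2, pow_mul]
      have : ((l z)^2)^c ≤ ((l z)^2)^1 :=
        pow_le_pow_of_le_one (sq_nonneg _) hz hc
      have h2c : (0:ℝ) < 2^c := by positivity
      nlinarith
    have h1' := hbound a ha
    have h2' := hbound b hb
    rw [Real.norm_eq_abs, abs_of_nonneg (sq_nonneg _)]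
    nlinarith [sq_nonneg ((2:ℝ)^((a:ℝ)/2) * (l z)^a + (2:ℝ)^((b:ℝ)/2) * (l z)^b)]
  -- the tsum vanishes, hence each term vanishes
  have hts : ∑' z, ((2:ℝ)^((n:ℝ)/2) * (l z)^n - (2:ℝ)^((m:ℝ)/2) * (l z)^m)^2 = 0 := by
    have := h0; rw [hΔ] at this; linarith
  have hkey : ∀ z, (2:ℝ)^((n:ℝ)/2) * (l z)^n = (2:ℝ)^((m:ℝ)/2) * (l z)^m := by
    intro z
    have hle := Summable.le_tsum (hsummable n m hn hm) z (fun j _ => sq_nonneg _)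
    rw [hts] at hle
    have := sq_nonneg ((2:ℝ)^((n:ℝ)/2) * (l z)^n - (2:ℝ)^((m:ℝ)/2) * (l z)^m)
    have hz0 : ((2:ℝ)^((n:ℝ)/2) * (l z)^n - (2:ℝ)^((m:ℝ)/2) * (l z)^m)^2 = 0 := le_antisymm hle this
    have := pow_eq_zero_iff (n := 2) (by norm_num) |>.mp hz0
    linarith
  have hdich : ∀ z, l z = 0 ∨ (l z)^2 = 1/2 := fun z => dichotomy (l z) hnm (hkey z)
  -- the support is finite
  have hev : ∀ᶠ z in cofinite, (l z)^2 < 1/2 :=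
    hsum.tendsto_cofinite_zero.eventually_lt_const (by norm_num)
  have hfin : {z : ℤ | ¬ (l z)^2 < 1/2}.Finite := Filter.eventually_cofinite.mp hev
  have hS : {z : ℤ | l z ≠ 0}.Finite := by
    apply hfin.subset
    intro z hz
    rcases hdich z with h | h
    · exact absurd h hz
    · simp [Set.mem_setOf_eq, h]
  -- the support has exactly two elements
  have hsum_eq : ∑' z, (l z)^2 = ∑ z ∈ hS.toFinset, (l z)^2 := by
    apply tsum_eq_sum
    intro z hz
    rw [Set.Finite.mem_toFinset] at hz
    simp only [Set.mem_setOf_eq, not_not] at hz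
    rw [hz]; ring
  have hconst : ∑ z ∈ hS.toFinset, (l z)^2 = (hS.toFinset.card : ℝ) * (1/2) := by
    rw [Finset.sum_congr rfl (fun z hz => ?_), Finset.sum_const, nsmul_eq_mul]
    rw [Set.Finite.mem_toFinset] at hz
    rcases hdich z with h | h
    · exact absurd h hz
    · exact h
  have hcard : hS.toFinset.card = 2 := by
    have : (hS.toFinset.card : ℝ) * (1/2) = 1 := by rw [← hconst, ← hsum_eq, h1]
    have : (hS.toFinset.card : ℝ) = 2 := by linarith
    exact_mod_cast this
  obtain ⟨k, j, hkj, hset⟩ := Finset.card_eq_two.mp hcard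
  have hkmem : l k ≠ 0 := by
    have : k ∈ hS.toFinset := by rw [hset]; simp
    rwa [Set.Finite.mem_toFinset] at this
  have hjmem : l j ≠ 0 := by
    have : j ∈ hS.toFinset := by rw [hset]; simp
    rwa [Set.Finite.mem_toFinset] at this
  have hk2 : (l k)^2 = 1/2 := (hdich k).resolve_left hkmem
  have hj2 : (l j)^2 = 1/2 := (hdich j).resolve_left hjmem
  have hzero : ∀ z, z ≠ k → z ≠ j → l z = 0 := by
    intro z hzk hzj
    by_contra hz
    have : z ∈ hS.toFinset := by rw [Set.Finite.mem_toFinset]; exact hz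
    rw [hset] at this
    simp only [Finset.mem_insert, Finset.mem_singleton] at this
    tauto
  refine ⟨⟨k, j, hkj, hk2, hj2, hzero⟩, ?_⟩
  intro n' m' hn' hm' hnm' heven'
  rw [hΔ n' m']
  have hterm : ∀ z, ((2:ℝ)^((n':ℝ)/2) * (l z)^n' - (2:ℝ)^((m':ℝ)/2) * (l z)^m')^2 = 0 := by
    intro z
    rcases hdich z with h | h
    · rw [h, zero_pow (by omega), zero_pow (by omega)]; ring
    · rw [helper (l z) h (parity_of_even heven')]; ring
  rw [tsum_congr hterm, tsum_zero, mul_zero]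
end

section
/- Let (a_ℓ)_{ℓ≥1} and (b_ℓ)_{ℓ≥1} be nonnegative square-summable sequences with Σ a_ℓ² + Σ b_ℓ² = 1, and suppose a_1² ≥ 1/2. Then for every n ≥ 2, Σ_ℓ a_ℓ^n ≥ Σ_ℓ b_ℓ^n. -/
/-- If a, b ≥ 0 with Σa² + Σb² = 1 and a_1² ≥ 1/2 (a_1 = a 0), then
Σ a_ℓ^n ≥ Σ b_ℓ^n for every n ≥ 2. -/
theorem stmt_4 (a b : ℕ → ℝ) (ha : ∀ i, 0 ≤ a i) (hb : ∀ i, 0 ≤ b i)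
    (hsa : Summable fun i => (a i)^2) (hsb : Summable fun i => (b i)^2)
    (h1 : (∑' i, (a i)^2) + (∑' i, (b i)^2) = 1)
    (ha1 : (a 0)^2 ≥ 1/2) :
    ∀ n : ℕ, 2 ≤ n → ∑' i, (a i)^n ≥ ∑' i, (b i)^n := by
  intro n hn
  set S := ∑' i, (b i)^2 with hS
  have hSa_nonneg : (0:ℝ) ≤ ∑' i, (a i)^2 := tsum_nonneg fun i => sq_nonneg _
  have hS_nonneg : (0:ℝ) ≤ S := tsum_nonneg fun i => sq_nonneg _
  have ha0le : (a 0)^2 ≤ ∑' i, (a i)^2 := Summable.le_tsum hsa 0 fun j _ => sq_nonneg _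
  have hSle : S ≤ (a 0)^2 := by
    have : S = 1 - ∑' i, (a i)^2 := by linarith
    nlinarith
  have hbi_le : ∀ i, b i ≤ a 0 := by
    intro i
    have h2 : (b i)^2 ≤ (a 0)^2 := le_trans (Summable.le_tsum hsb i fun j _ => sq_nonneg _) hSle
    exact (pow_le_pow_iff_left₀ (hb i) (ha 0) (by norm_num)).mp h2
  have hai_le1 : ∀ i, a i ≤ 1 := by
    intro i
    have h2 : (a i)^2 ≤ 1 := by
      have := Summable.le_tsum hsa i fun j _ => sq_nonneg _; linarith
    nlinarith [ha i]
  have hbi_le1 : ∀ i, b i ≤ 1 := by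
    intro i
    have h2 : (b i)^2 ≤ 1 := by
      have := Summable.le_tsum hsb i fun j _ => sq_nonneg _; linarith
    nlinarith [hb i]
  -- summability of a^n and b^n
  have hsan : Summable fun i => (a i)^n :=
    hsa.of_nonneg_of_le (fun i => pow_nonneg (ha i) n)
      (fun i => pow_le_pow_of_le_one (ha i) (hai_le1 i) hn)
  have hsbn : Summable fun i => (b i)^n :=
    hsb.of_nonneg_of_le (fun i => pow_nonneg (hb i) n)
      (fun i => pow_le_pow_of_le_one (hb i) (hbi_le1 i) hn)
  -- Σ b^n ≤ S * a0^(n-2)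
  have key : ∀ i, (b i)^n ≤ (b i)^2 * (a 0)^(n-2) := by
    intro i
    have : (b i)^n = (b i)^2 * (b i)^(n-2) := by
      rw [← pow_add]; congr 1; omega
    rw [this]
    exact mul_le_mul_of_nonneg_left
      (pow_le_pow_left₀ (hb i) (hbi_le i) _) (sq_nonneg _)
  have hsum : ∑' i, (b i)^n ≤ S * (a 0)^(n-2) := by
    calc ∑' i, (b i)^n ≤ ∑' i, (b i)^2 * (a 0)^(n-2) :=
          Summable.tsum_le_tsum key hsbn (hsb.mul_right _)
      _ = S * (a 0)^(n-2) := tsum_mul_right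
  have h2 : S * (a 0)^(n-2) ≤ (a 0)^2 * (a 0)^(n-2) :=
    mul_le_mul_of_nonneg_right hSle (pow_nonneg (ha 0) _)
  have h3 : (a 0)^2 * (a 0)^(n-2) = (a 0)^n := by
    rw [← pow_add]; congr 1; omega
  have h4 : (a 0)^n ≤ ∑' i, (a i)^n :=
    Summable.le_tsum hsan 0 fun j _ => pow_nonneg (ha j) n
  linarith
end

section
/- Let (λ_z)_{z∈ℤ} be a square-summable real sequence with Σ_z λ_z² = 1 and Σ_z λ_z⁴ ≥ 1/2, and define κ_n = 2^{n/2−1}(n−1)! Σ_z λ_z^n. Then for all r ≥ 1, κ_{2r} ≥ (2r−1)!. Moreover, if κ_{2r} = (2r−1)! for some r ≥ 3, then κ_{2s} = (2s−1)! for all s ≥ 1. -/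
lemma lemA : ∀ (m : ℕ) (x : ℝ), 0 ≤ x →
    ((m:ℝ)+1) * (1/2)^m * x ≤ x^(m+1) + (m:ℝ) * (1/2)^(m+1) := by
  intro m
  induction m with
  | zero => intro x hx; simp
  | succ m ih =>
    intro x hx
    have h := ih x hx
    have h1 : 0 ≤ x * (x^(m+1) + (m:ℝ)*(1/2)^(m+1) - ((m:ℝ)+1)*(1/2)^m*x) :=
      mul_nonneg hx (by linarith)
    have h2 : 0 ≤ ((m:ℝ)+1) * (1/2)^m * (x - 1/2)^2 :=
      mul_nonneg (by positivity) (sq_nonneg _)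
    have key : x^(m+1+1) + ((m:ℝ)+1)*(1/2)^(m+1+1) - (((m:ℝ)+1)+1)*(1/2)^(m+1)*x
        = x * (x^(m+1) + (m:ℝ)*(1/2)^(m+1) - ((m:ℝ)+1)*(1/2)^m*x)
          + ((m:ℝ)+1) * (1/2)^m * (x - 1/2)^2 := by
      ring
    push_cast
    linarith [key, h1, h2]

lemma lemB (k : ℕ) (x : ℝ) (hx : 0 ≤ x)
    (he : x^(k+2) + ((k:ℝ)+1) * (1/2)^(k+2) = ((k:ℝ)+2) * (1/2)^(k+1) * x) :
    x = 1/2 := by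
  have hA := lemA k x hx
  have h1 : 0 ≤ x * (x^(k+1) + (k:ℝ)*(1/2)^(k+1) - ((k:ℝ)+1)*(1/2)^k*x) :=
    mul_nonneg hx (by linarith)
  have key : x^(k+2) + ((k:ℝ)+1)*(1/2)^(k+2) - ((k:ℝ)+2)*(1/2)^(k+1)*x
      = x * (x^(k+1) + (k:ℝ)*(1/2)^(k+1) - ((k:ℝ)+1)*(1/2)^k*x)
        + ((k:ℝ)+1) * (1/2)^k * (x - 1/2)^2 := by ring
  have hle : ((k:ℝ)+1) * (1/2)^k * (x - 1/2)^2 ≤ 0 := by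
    rw [he, sub_self] at key; linarith
  have hsq : (x - 1/2)^2 = 0 := by
    by_contra hne
    have hpos : 0 < (x - 1/2)^2 := lt_of_le_of_ne (sq_nonneg _) (Ne.symm hne)
    have : 0 < ((k:ℝ)+1) * (1/2)^k * (x - 1/2)^2 := mul_pos (by positivity) hpos
    linarith
  have := pow_eq_zero_iff (n := 2) (by norm_num) |>.mp hsq
  linarith

/-- If Σ λ_z² = 1 and Σ λ_z⁴ ≥ 1/2, the cumulants
κ_n = 2^{n/2−1}(n−1)! Σ λ_z^n satisfy κ_{2r} ≥ (2r−1)! for all r ≥ 1, and if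
equality holds for some r ≥ 3 then it holds for all s ≥ 1. -/
theorem stmt_10 (l : ℤ → ℝ) (hsum : Summable fun z => (l z)^2)
    (h1 : ∑' z, (l z)^2 = 1) (h4 : ∑' z, (l z)^4 ≥ 1/2)
    (κ : ℕ → ℝ)
    (hκ : ∀ n, 2 ≤ n →
      κ n = (2:ℝ)^((n:ℝ)/2 - 1) * ((n-1).factorial : ℝ) * ∑' z, (l z)^n) :
    (∀ r : ℕ, 1 ≤ r → κ (2*r) ≥ ((2*r-1).factorial : ℝ)) ∧
    (∀ r : ℕ, 3 ≤ r → κ (2*r) = ((2*r-1).factorial : ℝ) →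
      ∀ s : ℕ, 1 ≤ s → κ (2*s) = ((2*s-1).factorial : ℝ)) := by
  set p : ℤ → ℝ := fun z => (l z)^2 with hpdef
  have hpnn : ∀ z, 0 ≤ p z := fun z => sq_nonneg _
  have hpsum : Summable p := hsum
  have hA1 : ∑' z, p z = 1 := h1
  have hple1 : ∀ z, p z ≤ 1 := fun z => hA1 ▸ Summable.le_tsum hpsum z (fun _ _ => hpnn _)
  have hsumr : ∀ r : ℕ, 1 ≤ r → Summable (fun z => p z ^ r) := by
    intro r hr
    refine hpsum.of_nonneg_of_le (fun z => pow_nonneg (hpnn z) r) (fun z => ?_)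
    calc p z ^ r ≤ p z ^ 1 := pow_le_pow_of_le_one (hpnn z) (hple1 z) hr
      _ = p z := pow_one _
  have hA2 : (1/2:ℝ) ≤ ∑' z, p z ^ 2 := by
    have : (fun z => (l z)^4) = fun z => p z ^ 2 := by
      funext z; simp only [hpdef]; ring
    rw [← this]; exact h4
  -- cumulant formula
  have hκr : ∀ r : ℕ, 1 ≤ r →
      κ (2*r) = 2^(r-1) * ((2*r-1).factorial : ℝ) * ∑' z, p z ^ r := by
    intro r hr
    rw [hκ (2*r) (by omega)]
    have hexp : ((2*r : ℕ):ℝ)/2 - 1 = ((r-1 : ℕ):ℝ) := by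
      push_cast [Nat.cast_sub hr]; ring
    rw [hexp, Real.rpow_natCast]
    congr 1
    exact tsum_congr fun z => pow_mul (l z) 2 r
  -- summability of the comparison combination
  have hcsum : ∀ m : ℕ,
      Summable (fun z => ((m:ℝ)+1)*(1/2)^m * p z ^ 2 - (m:ℝ)*(1/2)^(m+1) * p z) :=
    fun m => ((hsumr 2 (by omega)).mul_left _).sub (hpsum.mul_left _)
  -- pointwise tangent inequality
  have hpt : ∀ (m : ℕ) z,
      ((m:ℝ)+1)*(1/2)^m * p z ^ 2 - (m:ℝ)*(1/2)^(m+1) * p z ≤ p z ^ (m+2) := by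
    intro m z
    have hL := lemA m (p z) (hpnn z)
    have h1' := mul_nonneg (hpnn z) (sub_nonneg.mpr hL)
    have key : p z ^ (m+2) - (((m:ℝ)+1)*(1/2)^m * p z ^ 2 - (m:ℝ)*(1/2)^(m+1) * p z)
        = p z * (p z ^(m+1) + (m:ℝ)*(1/2)^(m+1) - ((m:ℝ)+1)*(1/2)^m * p z) := by ring
    linarith [key, h1']
  -- tsum of the combination
  have hts : ∀ m : ℕ,
      ∑' z, (((m:ℝ)+1)*(1/2)^m * p z ^ 2 - (m:ℝ)*(1/2)^(m+1) * p z)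
        = ((m:ℝ)+1)*(1/2)^m * (∑' z, p z ^ 2) - (m:ℝ)*(1/2)^(m+1) := by
    intro m
    rw [Summable.tsum_sub ((hsumr 2 (by omega)).mul_left _) (hpsum.mul_left _),
      tsum_mul_left, tsum_mul_left, hA1, mul_one]
  -- main summed inequality
  have main : ∀ m : ℕ,
      ((m:ℝ)+1)*(1/2)^m * (∑' z, p z ^ 2) - (m:ℝ)*(1/2)^(m+1)
        ≤ ∑' z, p z ^ (m+2) := by
    intro m
    have := Summable.tsum_le_tsum (hpt m) (hcsum m) (hsumr (m+2) (by omega))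
    rw [hts m] at this
    exact this
  -- lower bound on power sums
  have hAr : ∀ r : ℕ, 1 ≤ r → (1/2:ℝ)^(r-1) ≤ ∑' z, p z ^ r := by
    intro r hr
    rcases Nat.lt_or_ge r 2 with h | h
    · have : r = 1 := by omega
      subst this
      simp [pow_one, hA1]
    · obtain ⟨m, rfl⟩ : ∃ m, r = m + 2 := ⟨r - 2, by omega⟩
      have hm := main m
      have hc : (0:ℝ) ≤ ((m:ℝ)+1)*(1/2)^m := by positivity
      have h2 := mul_le_mul_of_nonneg_left hA2 hc
      have he : (1/2:ℝ)^(m+2-1) = (1/2)^m * (1/2) := by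
        norm_num [pow_succ]
      rw [he]
      nlinarith [pow_succ (1/2:ℝ) m]
  have honeTwo : ∀ r : ℕ, (2:ℝ)^(r-1) * (1/2)^(r-1) = 1 := by
    intro r; rw [← mul_pow]; norm_num
  have hfactpos : ∀ r : ℕ, (0:ℝ) < ((2*r-1).factorial : ℝ) := by
    intro r; exact_mod_cast Nat.factorial_pos _
  constructor
  · intro r hr
    rw [hκr r hr, ge_iff_le]
    have h2p : (0:ℝ) ≤ 2^(r-1) * ((2*r-1).factorial : ℝ) := by positivity
    calc ((2*r-1).factorial : ℝ)
        = 2^(r-1) * ((2*r-1).factorial : ℝ) * (1/2)^(r-1) := by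
          linear_combination (-(((2*r-1).factorial : ℝ))) * (honeTwo r)
      _ ≤ 2^(r-1) * ((2*r-1).factorial : ℝ) * ∑' z, p z ^ r :=
          mul_le_mul_of_nonneg_left (hAr r hr) h2p
  · intro r hr heq s hs
    obtain ⟨m, rfl⟩ : ∃ m, r = m + 3 := ⟨r - 3, by omega⟩
    rw [hκr (m+3) (by omega)] at heq
    have hF : ((2*(m+3)-1).factorial : ℝ) ≠ 0 := ne_of_gt (hfactpos (m+3))
    have key : (2:ℝ)^(m+3-1) * (∑' z, p z ^ (m+3)) = 1 := by
      apply mul_left_cancel₀ hF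
      linear_combination heq
    have hAreq : ∑' z, p z ^ (m+3) = (1/2:ℝ)^(m+2) := by
      have h2 := honeTwo (m+3)
      have e : (m+3-1) = m+2 := by omega
      rw [e] at key h2
      linear_combination (1/2:ℝ)^(m+2) * key - (∑' z, p z ^ (m+3)) * h2
    -- deduce ∑ p² = 1/2
    have hm := main (m+1)
    have hcpos : (0:ℝ) < (((m+1:ℕ):ℝ)+1) * (1/2)^(m+1) := by positivity
    have hA2eq : ∑' z, p z ^ 2 = 1/2 := by
      have hchain : (((m+1:ℕ):ℝ)+1)*(1/2)^(m+1) * (∑' z, p z ^ 2)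
          ≤ (((m+1:ℕ):ℝ)+1)*(1/2)^(m+1) * (1/2) := by
        have e1 : (m+1+2) = m+3 := by omega
        rw [e1, hAreq] at hm
        push_cast at hm ⊢
        nlinarith [hm, pow_succ (1/2:ℝ) (m+1), pow_succ (1/2:ℝ) (m+2)]
      have hle : (∑' z, p z ^ 2) ≤ 1/2 := le_of_mul_le_mul_left hchain hcpos
      linarith [hA2]
    -- the defect function has zero sum
    have hzero : ∑' z, (p z ^ (m+1+2)
        - ((((m+1:ℕ):ℝ)+1)*(1/2)^(m+1) * p z ^ 2 - ((m+1:ℕ):ℝ)*(1/2)^(m+1+1) * p z)) = 0 := by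
      rw [Summable.tsum_sub (hsumr (m+1+2) (by omega)) (hcsum (m+1)), hts (m+1), hA2eq]
      have e1 : (m+1+2) = m+3 := by omega
      rw [e1, hAreq]
      have e : (1/2:ℝ)^(m+2) = (1/2)^(m+1)*(1/2) := pow_succ _ _
      push_cast
      linear_combination ((m:ℝ)+2) * e
    -- pointwise vanishing
    have hFz0 : ∀ z, p z ^ (m+1+2)
        - ((((m+1:ℕ):ℝ)+1)*(1/2)^(m+1) * p z ^ 2 - ((m+1:ℕ):ℝ)*(1/2)^(m+1+1) * p z) = 0 := by
      intro z
      have hnn : ∀ w, 0 ≤ p w ^ (m+1+2)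
          - ((((m+1:ℕ):ℝ)+1)*(1/2)^(m+1) * p w ^ 2 - ((m+1:ℕ):ℝ)*(1/2)^(m+1+1) * p w) :=
        fun w => sub_nonneg.mpr (hpt (m+1) w)
      have hle := Summable.le_tsum ((hsumr (m+1+2) (by omega)).sub (hcsum (m+1))) z
        (fun w _ => hnn w)
      rw [hzero] at hle
      linarith [hnn z]
    -- every p z is 0 or 1/2
    have hval : ∀ z, p z = 0 ∨ p z = 1/2 := by
      intro z
      rcases eq_or_lt_of_le (hpnn z) with h0 | hpos
      · exact Or.inl h0.symm
      · right
        have hz := hFz0 z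
        push_cast at hz
        have hcan : p z ^ (m+2) + ((m:ℝ)+1) * (1/2)^(m+2) = ((m:ℝ)+2) * (1/2)^(m+1) * p z := by
          apply mul_left_cancel₀ (ne_of_gt hpos)
          have e : (1/2:ℝ)^(m+2) = (1/2)^(m+1)*(1/2) := pow_succ _ _
          linear_combination hz + ((m:ℝ)+1) * p z * e
        exact lemB m (p z) (hpnn z) hcan
    -- conclude for all s
    obtain ⟨t, rfl⟩ : ∃ t, s = t + 1 := ⟨s - 1, by omega⟩
    have hAs : ∑' z, p z ^ (t+1) = (1/2:ℝ)^t := by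
      have : ∀ z, p z ^ (t+1) = (1/2)^t * p z := by
        intro z
        rcases hval z with h | h
        · simp [h]
        · rw [h, pow_succ, mul_comm]
      rw [tsum_congr this, tsum_mul_left, hA1, mul_one]
    rw [hκr (t+1) (by omega)]
    have e : (t+1-1) = t := by omega
    rw [e, hAs]
    have h2 := honeTwo (t+1)
    rw [e] at h2
    linear_combination (((2*(t+1)-1).factorial : ℝ)) * h2
end

section
/- Let (λ_z)_{z∈ℤ} be square-summable with Σ λ_z² = 1, and define free cumulants ĸ_n = Σ_z λ_z^n. Then ĸ_6 − ĸ_4 + (1/4)ĸ_2 = Σ_z λ_z²(λ_z² − 1/2)² ≥ 0. Consequently, for F in the second Wigner chaos with φ(F²) = 1, one has φ(F⁶) − 7φ(F⁴) + (37/4)φ(F²) = ĸ_6 − ĸ_4 + (1/4)ĸ_2 + 3ĸ_3² ≥ 0. -/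
/-- On the second Wigner chaos with unit variance, the free cumulants
ĸ_n = Σ λ_z^n satisfy ĸ_6 − ĸ_4 + (1/4)ĸ_2 = Σ λ_z²(λ_z² − 1/2)² ≥ 0;
consequently φ(F⁶) − 7φ(F⁴) + (37/4)φ(F²) = ĸ_6 − ĸ_4 + (1/4)ĸ_2 + 3ĸ_3² ≥ 0,
where the moments are φ(F²) = ĸ_2, φ(F⁴) = ĸ_4 + 2ĸ_2²,
φ(F⁶) = ĸ_6 + 6ĸ_4ĸ_2 + 3ĸ_3² + 5ĸ_2³. -/
theorem stmt_15 (l : ℤ → ℝ) (hsum : Summable fun z => (l z)^2)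
    (h1 : ∑' z, (l z)^2 = 1)
    (κ : ℕ → ℝ) (hκ : ∀ n, 2 ≤ n → κ n = ∑' z, (l z)^n) :
    (κ 6 - κ 4 + (1/4) * κ 2 = ∑' z, (l z)^2 * ((l z)^2 - 1/2)^2 ∧
      0 ≤ κ 6 - κ 4 + (1/4) * κ 2) ∧
    ∀ φ2 φ4 φ6 : ℝ, φ2 = κ 2 → φ4 = κ 4 + 2 * (κ 2)^2 →
      φ6 = κ 6 + 6 * κ 4 * κ 2 + 3 * (κ 3)^2 + 5 * (κ 2)^3 →
      φ6 - 7 * φ4 + (37/4) * φ2 = κ 6 - κ 4 + (1/4) * κ 2 + 3 * (κ 3)^2 ∧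
      0 ≤ φ6 - 7 * φ4 + (37/4) * φ2 := by
  have hsmall : ∀ᶠ z in Filter.cofinite, (l z)^2 ≤ 1 := by
    have := hsum.tendsto_cofinite_zero
    exact this.eventually (ge_mem_nhds (by norm_num : (0:ℝ) < 1)) |>.mono
      (fun z hz => hz)
  have hsum4 : Summable fun z => (l z)^4 := by
    refine hsum.of_norm_bounded_eventually (hsmall.mono fun z hz => ?_)
    have h0 : (0:ℝ) ≤ (l z)^2 := sq_nonneg _
    rw [Real.norm_of_nonneg (by positivity)]
    nlinarith [sq_nonneg (l z)]
  have hsum6 : Summable fun z => (l z)^6 := by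
    refine hsum.of_norm_bounded_eventually (hsmall.mono fun z hz => ?_)
    have h0 : (0:ℝ) ≤ (l z)^2 := sq_nonneg _
    rw [Real.norm_of_nonneg (by positivity)]
    nlinarith [sq_nonneg (l z), sq_nonneg ((l z)^2), mul_nonneg h0 h0]
  have key : κ 6 - κ 4 + (1/4) * κ 2 = ∑' z, (l z)^2 * ((l z)^2 - 1/2)^2 := by
    rw [hκ 6 (by norm_num), hκ 4 (by norm_num), hκ 2 (by norm_num)]
    calc (∑' z, (l z)^6) - (∑' z, (l z)^4) + (1/4) * (∑' z, (l z)^2)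
        = (∑' z, ((l z)^6 - (l z)^4)) + ∑' z, (1/4) * (l z)^2 := by
          rw [Summable.tsum_sub hsum6 hsum4, tsum_mul_left]
      _ = ∑' z, ((l z)^6 - (l z)^4 + (1/4) * (l z)^2) :=
          (Summable.tsum_add (hsum6.sub hsum4) (hsum.mul_left (1/4))).symm
      _ = ∑' z, (l z)^2 * ((l z)^2 - 1/2)^2 := by congr 1; funext z; ring
  have hnn : 0 ≤ κ 6 - κ 4 + (1/4) * κ 2 := by
    rw [key]
    exact tsum_nonneg fun z => mul_nonneg (sq_nonneg _) (sq_nonneg _)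
  refine ⟨⟨key, hnn⟩, fun φ2 φ4 φ6 h2 h4 h6 => ?_⟩
  have hκ2 : κ 2 = 1 := by rw [hκ 2 (by norm_num), h1]
  subst h2 h4 h6
  constructor
  · rw [hκ2]; ring
  · rw [hκ2] at hnn ⊢; nlinarith [sq_nonneg (κ 3)]
end

section
/- Let (λ_z)_{z∈ℤ} be square-summable with Σ_z λ_z² = 1 and Σ_z λ_z⁴ ≥ 1/2, and define free cumulants ĸ_n = Σ_z λ_z^n. Then for all n ≥ 1, ĸ_{2n} ≥ 2^{1−n}, i.e., 2^{n−1}ĸ_{2n} − ĸ_2 ≥ (n−1)(2ĸ_4 − ĸ_2) ≥ 0. If moreover ĸ_{2n} = 2^{1−n} for some n ≥ 3, then ĸ_{2s} = 2^{1−s} for all s ≥ 1. -/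
private lemma aux_u_stmt16 (u : ℝ) (hu0 : 0 ≤ u) (k : ℕ) :
    (u - 1) * (u ^ (k+1) - u) ≥ 0 := by
  rcases le_total u 1 with h | h
  · have h2 : u ^ (k+1) ≤ u ^ 1 := pow_le_pow_of_le_one hu0 h (Nat.le_add_left 1 k)
    rw [pow_one] at h2
    nlinarith
  · have h2 : u ≤ u ^ (k+1) := le_self_pow₀ h (Nat.succ_ne_zero k)
    nlinarith

/-- If Σ λ_z² = 1 and Σ λ_z⁴ ≥ 1/2, the free cumulants ĸ_n = Σ λ_z^n satisfy
ĸ_{2n} ≥ 2^{1−n}, i.e. 2^{n−1}ĸ_{2n} − ĸ_2 ≥ (n−1)(2ĸ_4 − ĸ_2) ≥ 0, and if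
ĸ_{2n} = 2^{1−n} for some n ≥ 3 then ĸ_{2s} = 2^{1−s} for all s ≥ 1. -/
theorem stmt_16 (l : ℤ → ℝ) (hsum : Summable fun z => (l z)^2)
    (h1 : ∑' z, (l z)^2 = 1) (h4 : ∑' z, (l z)^4 ≥ 1/2)
    (κ : ℕ → ℝ) (hκ : ∀ n, 2 ≤ n → κ n = ∑' z, (l z)^n) :
    (∀ n : ℕ, 1 ≤ n →
      κ (2*n) ≥ (2:ℝ)^(1 - (n:ℤ)) ∧
      (2:ℝ)^((n:ℤ) - 1) * κ (2*n) - κ 2 ≥ ((n:ℝ) - 1) * (2 * κ 4 - κ 2) ∧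
      ((n:ℝ) - 1) * (2 * κ 4 - κ 2) ≥ 0) ∧
    (∀ n : ℕ, 3 ≤ n → κ (2*n) = (2:ℝ)^(1 - (n:ℤ)) →
      ∀ s : ℕ, 1 ≤ s → κ (2*s) = (2:ℝ)^(1 - (s:ℤ))) := by
  have ht0 : ∀ z, (0:ℝ) ≤ (l z)^2 := fun z => sq_nonneg _
  have ht1 : ∀ z, (l z)^2 ≤ 1 := by
    intro z
    have := Summable.le_tsum hsum z (fun j _ => sq_nonneg (l j))
    rwa [h1] at this
  have hS : ∀ k : ℕ, Summable fun z => ((l z)^2)^(k+1) := by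
    intro k
    apply Summable.of_nonneg_of_le (fun z => pow_nonneg (ht0 z) _) _ hsum
    intro z
    calc ((l z)^2)^(k+1) ≤ ((l z)^2)^1 :=
          pow_le_pow_of_le_one (ht0 z) (ht1 z) (Nat.le_add_left 1 k)
      _ = (l z)^2 := pow_one _
  have hκ2 : κ 2 = 1 := by rw [hκ 2 (by norm_num), h1]
  have hκe : ∀ j : ℕ, 1 ≤ j → κ (2*j) = ∑' z, ((l z)^2)^j := by
    intro j hj
    rw [hκ (2*j) (by omega)]
    exact tsum_congr fun z => pow_mul _ 2 j
  have hκ4e : κ 4 = ∑' z, ((l z)^2)^2 := by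
    rw [hκ 4 (by norm_num)]
    exact tsum_congr fun z => by ring
  have hκ4 : κ 4 ≥ 1/2 := by rw [hκ 4 (by norm_num)]; exact h4
  -- the single telescoping step
  have step : ∀ j : ℕ, (2:ℝ)^(j+1) * κ (2*(j+2)) + κ 2 ≥ 2^j * κ (2*(j+1)) + 2 * κ 4 := by
    intro j
    have hS2 : Summable fun z => ((l z)^2)^2 := hS 1
    have key : ∑' z, ((2:ℝ)^j * ((l z)^2)^(j+1) + 2 * ((l z)^2)^2)
        ≤ ∑' z, ((2:ℝ)^(j+1) * ((l z)^2)^(j+2) + (l z)^2) := by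
      apply Summable.tsum_le_tsum _ (((hS j).mul_left _).add (hS2.mul_left _))
        (((hS (j+1)).mul_left _).add hsum)
      intro z
      have hq0 := ht0 z
      have hu := aux_u_stmt16 (2*(l z)^2) (by linarith) j
      have e1 : (2*(l z)^2)^(j+1) = 2^(j+1)*((l z)^2)^(j+1) := mul_pow _ _ _
      have e2 : (2:ℝ)^(j+1) = 2*2^j := by rw [pow_succ]; ring
      have e3 : ((l z)^2)^(j+2) = ((l z)^2)^(j+1)*((l z)^2) := by ring
      rw [e1, e2] at hu
      rw [e2, e3]
      nlinarith [hu]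
    rw [Summable.tsum_add ((hS j).mul_left _) (hS2.mul_left _),
        Summable.tsum_add ((hS (j+1)).mul_left _) hsum,
        tsum_mul_left, tsum_mul_left, tsum_mul_left] at key
    simp only [show j+1+1 = j+2 from rfl] at key
    rw [h1] at key
    rw [hκe (j+2) (by omega), hκe (j+1) (by omega), hκ2, hκ4e]
    linarith [key]
  -- telescoped monotonicity
  have mono : ∀ k : ℕ, 1 ≤ k → ∀ m : ℕ, k ≤ m →
      (2:ℝ)^(m-1) * κ (2*m) ≥ 2^(k-1) * κ (2*k) + ((m:ℝ) - (k:ℝ)) * (2 * κ 4 - κ 2) := by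
    intro k hk m hm
    induction m, hm using Nat.le_induction with
    | base => simp
    | succ m hm ih =>
      obtain ⟨j, rfl⟩ : ∃ j, m = j+1 := ⟨m-1, by omega⟩
      have hst := step j
      have hrw : 2*(j+1+1) = 2*(j+2) := by ring
      rw [hrw]
      simp only [Nat.add_sub_cancel] at ih ⊢
      push_cast
      push_cast at ih
      linarith [hst, ih]
  constructor
  · intro n hn
    have hm := mono 1 le_rfl n hn
    norm_num [hκ2] at hm
    have hnR : (1:ℝ) ≤ (n:ℝ) := by exact_mod_cast hn
    have hnn : ((n:ℝ) - 1) * (2 * κ 4 - κ 2) ≥ 0 := by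
      rw [hκ2]
      apply mul_nonneg <;> linarith
    refine ⟨?_, ?_, hnn⟩
    · have hpos : (0:ℝ) < 2^(n-1) := by positivity
      have h1' : (1:ℝ) ≤ 2^(n-1) * κ (2*n) := by
        rw [hκ2] at hnn
        linarith [hm, hnn]
      have hp : (2:ℝ)^(1 - (n:ℤ)) = ((2:ℝ)^(n-1))⁻¹ := by
        have h' : (1:ℤ) - (n:ℤ) = -((n-1:ℕ):ℤ) := by omega
        rw [h', zpow_neg, zpow_natCast]
      rw [ge_iff_le, hp, ← one_div, div_le_iff₀ hpos]
      linarith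
    · have h' : (n:ℤ) - 1 = ((n-1:ℕ):ℤ) := by omega
      rw [h', zpow_natCast, hκ2]
      linarith [hm, hnn]
  · intro n hn heq s hs
    have hnR : (3:ℝ) ≤ (n:ℝ) := by exact_mod_cast hn
    have hpos : (0:ℝ) < 2^(n-1) := by positivity
    have hp : (2:ℝ)^(1 - (n:ℤ)) = ((2:ℝ)^(n-1))⁻¹ := by
      have h' : (1:ℤ) - (n:ℤ) = -((n-1:ℕ):ℤ) := by omega
      rw [h', zpow_neg, zpow_natCast]
    have haN : (2:ℝ)^(n-1) * κ (2*n) = 1 := by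
      rw [heq, hp, mul_inv_cancel₀ (ne_of_gt hpos)]
    have hm1n := mono 1 le_rfl n (by omega)
    norm_num [hκ2] at hm1n
    have hκ4' : 2 * κ 4 - κ 2 = 0 := by
      rw [hκ2]
      nlinarith [hm1n, hκ4, haN, hnR]
    have hm13 := mono 1 le_rfl 3 (by norm_num)
    have hm3n := mono 3 (by norm_num) n hn
    rw [hκ4', mul_zero] at hm13 hm3n
    norm_num [hκ2] at hm13 hm3n
    -- hm13 : 4 * κ 6 ≥ 1 ; hm3n : 2^(n-1) * κ (2*n) ≥ 4 * κ 6
    have hκ6 : κ 6 = 1/4 := by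
      rw [haN] at hm3n
      nlinarith [hm13, hm3n]
    have hκ4'' : κ 4 = 1/2 := by rw [hκ2] at hκ4'; linarith
    -- the vanishing nonnegative sum
    have hκ6e : κ 6 = ∑' z, ((l z)^2)^3 := by
      have := hκe 3 (by norm_num)
      norm_num at this
      exact this
    set f : ℤ → ℝ := fun z => (l z)^2 * (2*(l z)^2 - 1)^2 with hf
    have hfe : ∀ z, f z = (4*((l z)^2)^3 + (l z)^2) - 4*((l z)^2)^2 := by
      intro z; simp only [hf]; ring
    have hsf : Summable f := by
      rw [show f = fun z => (4*((l z)^2)^3 + (l z)^2) - 4*((l z)^2)^2 from funext hfe]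
      exact (((hS 2).mul_left 4).add hsum).sub ((hS 1).mul_left 4)
    have htf : ∑' z, f z = 0 := by
      calc ∑' z, f z = ∑' z, ((4*((l z)^2)^3 + (l z)^2) - 4*((l z)^2)^2) := tsum_congr hfe
        _ = (∑' z, (4*((l z)^2)^3 + (l z)^2)) - ∑' z, 4*((l z)^2)^2 :=
            Summable.tsum_sub (((hS 2).mul_left 4).add hsum) ((hS 1).mul_left 4)
        _ = (4*(∑' z, ((l z)^2)^3) + ∑' z, (l z)^2) - 4*(∑' z, ((l z)^2)^2) := by
            rw [Summable.tsum_add ((hS 2).mul_left 4) hsum, tsum_mul_left, tsum_mul_left]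
        _ = 0 := by rw [← hκ6e, ← hκ4e, h1, hκ6, hκ4'']; norm_num
    have hzz : ∀ z, (l z)^2 = 0 ∨ (l z)^2 = 1/2 := by
      intro z
      have h0 : 0 ≤ f z := mul_nonneg (sq_nonneg _) (sq_nonneg _)
      have hle : f z ≤ 0 := by
        have := Summable.le_tsum hsf z (fun j _ => mul_nonneg (sq_nonneg _) (sq_nonneg _))
        rwa [htf] at this
      have hfz : f z = 0 := le_antisymm hle h0
      rcases mul_eq_zero.1 hfz with h | h
      · exact Or.inl h
      · right
        have := sq_eq_zero_iff.1 h
        linarith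
    obtain ⟨m, rfl⟩ : ∃ m, s = m+1 := ⟨s-1, by omega⟩
    have hpt : ∀ z, ((l z)^2)^(m+1) = ((1:ℝ)/2)^m * (l z)^2 := by
      intro z
      rcases hzz z with h | h
      · rw [h]; simp
      · rw [h, pow_succ]
    have : κ (2*(m+1)) = ((1:ℝ)/2)^m := by
      rw [hκe (m+1) (by omega), tsum_congr hpt, tsum_mul_left, h1, mul_one]
    rw [this]
    have h' : (1:ℤ) - ((m+1:ℕ):ℤ) = -(m:ℤ) := by push_cast; ring
    rw [h', zpow_neg, zpow_natCast, div_pow]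
    norm_num
end

section
/- For every n ≥ 3, the 2n-th moment of the centered normalized chi-square with two degrees of freedom, μ_{2n} = Σ_{s=0}^{2n} (−1)^s (2n)!/(2n−s)!, is strictly greater than the 2n-th moment of the normal product law, ((2n)!/(n!·2^n))² = ((2n−1)!!)². -/
open Finset

lemma aux_df_lt_derangements : ∀ n : ℕ, 3 ≤ n →
    ((Nat.doubleFactorial (2*n-1) : ℤ))^2 < (numDerangements (2*n) : ℤ) := by
  intro n hn
  induction n, hn using Nat.le_induction with
  | base => decide
  | succ n hn ih =>
    have hD1 : (numDerangements (2*n+1) : ℤ) = (2*n+1) * (numDerangements (2*n) : ℤ) - 1 := by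
      have := numDerangements_succ (2*n)
      simpa [pow_mul] using this
    have hD2 : (numDerangements (2*(n+1)) : ℤ)
        = (2*n+2) * (numDerangements (2*n+1) : ℤ) + 1 := by
      have := numDerangements_succ (2*n+1)
      have h2 : 2*(n+1) = 2*n+1+1 := by omega
      rw [h2]
      rw [this]
      have : ((-1:ℤ)) ^ (2*n+1) = -1 := by
        simp [pow_succ, pow_mul]
      rw [this]; push_cast; ring
    have hdf : (Nat.doubleFactorial (2*(n+1)-1) : ℤ)
        = (2*n+1) * (Nat.doubleFactorial (2*n-1) : ℤ) := by
      have h : 2*(n+1)-1 = (2*n-1) + 2 := by omega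
      rw [h, Nat.doubleFactorial_add_two]
      have h2 : 2*n-1+2 = 2*n+1 := by omega
      push_cast [h2]; ring
    set r : ℤ := (Nat.doubleFactorial (2*n-1) : ℤ) with hr
    set D : ℤ := (numDerangements (2*n) : ℤ) with hD
    have hr0 : 0 ≤ r := by positivity
    have hn3 : (3:ℤ) ≤ n := by exact_mod_cast hn
    rw [hD2, hD1, hdf]
    nlinarith [ih, hr0, hn3, sq_nonneg r]

/-- For n ≥ 3 the 2n-th moment of the centered normalized chi-square with two
degrees of freedom, Σ_{s=0}^{2n} (−1)^s (2n)!/(2n−s)!, strictly exceeds the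
2n-th moment ((2n)!/(n!2^n))² = ((2n−1)!!)² of the normal product law. -/
theorem stmt_19 : ∀ n : ℕ, 3 ≤ n →
    (∑ s ∈ Finset.range (2*n+1),
        (-1:ℝ)^s * ((2*n).factorial : ℝ) / (((2*n - s).factorial : ℕ) : ℝ))
      > (((2*n).factorial : ℝ) / ((n.factorial : ℝ) * 2^n))^2 ∧
    (((2*n).factorial : ℝ) / ((n.factorial : ℝ) * 2^n))^2
      = ((Nat.doubleFactorial (2*n-1) : ℕ) : ℝ)^2 := by
  intro n hn
  -- factorial factorization
  have hfacN : (2*n).factorial = 2^n * n.factorial * Nat.doubleFactorial (2*n-1) := by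
    have h : 2*n = (2*n-1)+1 := by omega
    calc (2*n).factorial = ((2*n-1)+1).factorial := by rw [← h]
      _ = ((2*n-1)+1).doubleFactorial * (2*n-1).doubleFactorial :=
          Nat.factorial_eq_mul_doubleFactorial _
      _ = (2*n).doubleFactorial * (2*n-1).doubleFactorial := by rw [← h]
      _ = 2^n * n.factorial * (2*n-1).doubleFactorial := by
          rw [Nat.doubleFactorial_two_mul]
  have hne : (n.factorial : ℝ) * 2^n ≠ 0 := by positivity
  have hdiv : ((2*n).factorial : ℝ) / ((n.factorial : ℝ) * 2^n)
      = ((Nat.doubleFactorial (2*n-1) : ℕ) : ℝ) := by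
    rw [hfacN]; push_cast; field_simp
  constructor
  · -- sum equals numDerangements (2n)
    have hsum : (∑ s ∈ Finset.range (2*n+1),
        (-1:ℝ)^s * ((2*n).factorial : ℝ) / (((2*n - s).factorial : ℕ) : ℝ))
        = ((numDerangements (2*n) : ℤ) : ℝ) := by
      rw [numDerangements_sum]
      push_cast
      rw [← Finset.sum_range_reflect]
      refine Finset.sum_congr rfl ?_
      intro j hj
      have hj' : j ≤ 2*n := by
        have := Finset.mem_range.mp hj; omega
      have hidx : 2*n + 1 - 1 - j = 2*n - j := by omega
      rw [hidx]
      have hsub : 2*n - (2*n - j) = j := by omega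
      rw [hsub]
      have hsign : (-1:ℝ)^(2*n-j) = (-1:ℝ)^j := by
        have h1 : (-1:ℝ)^(2*n-j) * (-1:ℝ)^j = 1 := by
          rw [← pow_add]
          have h2 : 2*n - j + j = 2*n := by omega
          rw [h2, pow_mul]; norm_num
        have h3 : (-1:ℝ)^j * (-1:ℝ)^j = 1 := by
          rw [← pow_add, ← two_mul, pow_mul]; norm_num
        have hx : ((-1:ℝ)^j) ≠ 0 := pow_ne_zero _ (by norm_num)
        exact mul_right_cancel₀ hx (h1.trans h3.symm)
      have hasc : ((2*n).factorial : ℝ)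
          = (j.factorial : ℝ) * ((j+1).ascFactorial (2*n-j) : ℝ) := by
        have := Nat.factorial_mul_ascFactorial j (2*n-j)
        have h2 : j + (2*n - j) = 2*n := by omega
        rw [h2] at this
        exact_mod_cast this.symm
      have hjne : (j.factorial : ℝ) ≠ 0 := by positivity
      rw [hsign, hasc]
      field_simp
    rw [hsum, hdiv]
    have h := aux_df_lt_derangements n hn
    exact_mod_cast h
  · rw [hdiv]
end
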